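/- Let L and M be real p×m matrices. Then L L^T = M M^T if and only if there exists an orthogonal m×m matrix Ω such that L Ω = M. -/

import Mathlib

open Matrix

lemma toEuclideanLin_mul {m n k : ℕ} (A : Matrix (Fin m) (Fin n) ℝ)
    (B : Matrix (Fin n) (Fin k) ℝ) :
    Matrix.toEuclideanLin (A * B) =
      (Matrix.toEuclideanLin A).comp (Matrix.toEuclideanLin B) := by
  apply LinearMap.ext
  intro x
  apply (WithLp.equiv 2 _).injective
  simp [Matrix.ofLp_toEuclideanLin_apply, Matrix.mulVec_mulVec, ← Matrix.toLin'_apply]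

theorem stmt1 (p m : ℕ) (L M : Matrix (Fin p) (Fin m) ℝ) :
    L * Lᵀ = M * Mᵀ ↔
      ∃ Ω : Matrix (Fin m) (Fin m) ℝ, Ωᵀ * Ω = 1 ∧ L * Ω = M := by
  constructor
  · intro h
    set V := EuclideanSpace ℝ (Fin m)
    set F : EuclideanSpace ℝ (Fin p) →ₗ[ℝ] V := Matrix.toEuclideanLin Lᵀ with hF
    set G : EuclideanSpace ℝ (Fin p) →ₗ[ℝ] V := Matrix.toEuclideanLin Mᵀ with hG
    -- key inner product identity
    have key : ∀ x y, inner ℝ (F x) (F y) = (inner ℝ (G x) (G y) : ℝ) := by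
      intro x y
      have h1 : inner ℝ (F x) (F y) = (inner ℝ x (Matrix.toEuclideanLin (L * Lᵀ) y) : ℝ) := by
        rw [toEuclideanLin_mul]
        have hl : Matrix.toEuclideanLin L = LinearMap.adjoint F := by
          rw [hF, ← Matrix.toEuclideanLin_conjTranspose_eq_adjoint,
            Matrix.conjTranspose_eq_transpose_of_trivial, Matrix.transpose_transpose]
        rw [hl, LinearMap.comp_apply, LinearMap.adjoint_inner_right]
      have h2 : inner ℝ (G x) (G y) = (inner ℝ x (Matrix.toEuclideanLin (M * Mᵀ) y) : ℝ) := by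
        rw [toEuclideanLin_mul]
        have hl : Matrix.toEuclideanLin M = LinearMap.adjoint G := by
          rw [hG, ← Matrix.toEuclideanLin_conjTranspose_eq_adjoint,
            Matrix.conjTranspose_eq_transpose_of_trivial, Matrix.transpose_transpose]
        rw [hl, LinearMap.comp_apply, LinearMap.adjoint_inner_right]
      rw [h1, h2, h]
    have hker : LinearMap.ker F ≤ LinearMap.ker G := by
      intro x hx
      rw [LinearMap.mem_ker] at hx ⊢
      have : (inner ℝ (G x) (G x) : ℝ) = 0 := by rw [← key, hx, inner_zero_left]
      exact inner_self_eq_zero.mp this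
    -- map on range F
    let φ : ↥(LinearMap.range F) →ₗ[ℝ] V :=
      (LinearMap.ker F).liftQ G hker ∘ₗ (F.quotKerEquivRange.symm : _ →ₗ[ℝ] _)
    have hφ : ∀ x : EuclideanSpace ℝ (Fin p), ∀ hx, φ ⟨F x, hx⟩ = G x := by
      intro x hx
      simp only [φ, LinearMap.coe_comp, Function.comp_apply, LinearEquiv.coe_coe]
      rw [F.quotKerEquivRange_symm_apply_image x hx]
      rfl
    have hφiso : ∀ s : ↥(LinearMap.range F), ‖φ s‖ = ‖s‖ := by
      rintro ⟨_, x, rfl⟩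
      rw [hφ x ⟨x, rfl⟩]
      have hc : ‖(⟨F x, ⟨x, rfl⟩⟩ : ↥(LinearMap.range F))‖ = ‖F x‖ := rfl
      rw [hc]
      have := key x x
      rw [real_inner_self_eq_norm_sq, real_inner_self_eq_norm_sq] at this
      have h1 : (0:ℝ) ≤ ‖F x‖ := norm_nonneg _
      have h2 : (0:ℝ) ≤ ‖G x‖ := norm_nonneg _
      nlinarith
    let ψ : ↥(LinearMap.range F) →ₗᵢ[ℝ] V := ⟨φ, hφiso⟩
    let T := ψ.extend
    have hT : ∀ x, T (F x) = G x := by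
      intro x
      have : F x ∈ LinearMap.range F := ⟨x, rfl⟩
      have := ψ.extend_apply ⟨F x, this⟩
      simpa [ψ, hφ x] using this
    set B : Matrix (Fin m) (Fin m) ℝ := Matrix.toEuclideanLin.symm T.toLinearMap with hB
    have hBT : Matrix.toEuclideanLin B = T.toLinearMap := by
      rw [hB]; exact Matrix.toEuclideanLin.apply_symm_apply _
    have hBL : B * Lᵀ = Mᵀ := by
      apply Matrix.toEuclideanLin.injective
      rw [toEuclideanLin_mul, hBT]
      apply LinearMap.ext
      intro x
      exact hT x
    have hBB : Bᵀ * B = 1 := by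
      apply Matrix.toEuclideanLin.injective
      rw [toEuclideanLin_mul]
      have hadj : Matrix.toEuclideanLin Bᵀ = LinearMap.adjoint (Matrix.toEuclideanLin B) := by
        rw [← Matrix.toEuclideanLin_conjTranspose_eq_adjoint,
          Matrix.conjTranspose_eq_transpose_of_trivial]
      rw [hadj, hBT]
      have hone : Matrix.toEuclideanLin (1 : Matrix (Fin m) (Fin m) ℝ) = LinearMap.id := by
        apply LinearMap.ext
        intro z
        apply (WithLp.equiv 2 _).injective
        simp [Matrix.ofLp_toEuclideanLin_apply]
      rw [hone]
      apply LinearMap.ext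
      intro x
      apply ext_inner_right ℝ
      intro y
      rw [LinearMap.comp_apply, LinearMap.adjoint_inner_left, LinearMap.id_apply]
      exact T.inner_map_map x y
    refine ⟨Bᵀ, ?_, ?_⟩
    · rw [Matrix.transpose_transpose]
      exact mul_eq_one_comm.mp hBB
    · have := congrArg Matrix.transpose hBL
      rw [Matrix.transpose_mul, Matrix.transpose_transpose] at this
      exact this
  · rintro ⟨Ω, hΩ, rfl⟩
    rw [Matrix.transpose_mul, Matrix.mul_assoc, ← Matrix.mul_assoc Ω,
      mul_eq_one_comm.mp hΩ, Matrix.one_mul]
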